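/- Given positive integers a_1,...,a_k, set b_1 = 1 and b_i = a_1 + ... + a_i for 2 ≤ i ≤ k. The generating function Σ_λ q^{|λ|} over all nonnegative integer sequences (λ_1,...,λ_k) satisfying λ_i · a_{i+1} ≥ a_i · λ_{i+1} for 1 ≤ i ≤ k-1 equals [Σ over (z_2,...,z_k) with 0 ≤ z_i < a_i of q^{⌈a_1 z_2 / a_2⌉ + Σ_{i=2}^k z_i}·Π_{i=2}^{k-1} q^{b_i·⌈z_{i+1}/a_{i+1} - z_i/a_i⌉}] / Π_{i=1}^k (1 - q^{b_i}). -/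

import Mathlib

/-- `b₁ = 1` and `bᵢ = a₁ + ⋯ + aᵢ` for `i ≥ 2`. -/
def bseq (a : ℕ → ℕ) (i : ℕ) : ℤ :=
  if i = 1 then 1 else ∑ j ∈ Finset.Icc 1 i, (a j : ℤ)

namespace Stmt15

def cterm (a z : ℕ → ℕ) (i : ℕ) : ℤ :=
  ⌈(z (i + 1) : ℚ) / (a (i + 1) : ℚ) - (z i : ℚ) / (a i : ℚ)⌉

def zfun (a : ℕ → ℕ) (k : ℕ) (lam : ℕ → ℕ) : ℕ → ℕ :=
  fun i => if 2 ≤ i ∧ i ≤ k then lam i % a i else 0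

def sfun (a : ℕ → ℕ) (k : ℕ) (lam : ℕ → ℕ) : ℕ → ℕ :=
  fun i =>
    if i = 1 then ((lam 1 : ℤ) - ⌈((a 1 : ℚ) * (lam 2 : ℚ)) / (a 2 : ℚ)⌉).toNat
    else if 2 ≤ i ∧ i ≤ k - 1 then
      (((lam i / a i : ℕ) : ℤ) - ((lam (i + 1) / a (i + 1) : ℕ) : ℤ)
        - cterm a (zfun a k lam) i).toNat
    else if i = k then lam k / a k
    else 0

def Tfun (a : ℕ → ℕ) (k : ℕ) (z s : ℕ → ℕ) (i : ℕ) : ℤ :=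
  (∑ j ∈ Finset.Icc i (k - 1), ((s j : ℤ) + cterm a z j)) + (s k : ℤ)

def lam0 (a : ℕ → ℕ) (k : ℕ) (z s : ℕ → ℕ) : ℕ → ℕ :=
  fun i => if 2 ≤ i ∧ i ≤ k then ((a i : ℤ) * Tfun a k z s i).toNat + z i else 0

def lamfun (a : ℕ → ℕ) (k : ℕ) (z s : ℕ → ℕ) : ℕ → ℕ :=
  fun i => if i = 1 then (⌈((a 1 : ℚ) * (lam0 a k z s 2 : ℚ)) / (a 2 : ℚ)⌉).toNat + s 1
    else lam0 a k z s i

lemma sum_Icc_bot {M : Type*} [AddCommMonoid M] (f : ℕ → M) {i m : ℕ} (h : i ≤ m) :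
    ∑ j ∈ Finset.Icc i m, f j = f i + ∑ j ∈ Finset.Icc (i + 1) m, f j := by
  rw [← Finset.Ico_add_one_right_eq_Icc, Finset.sum_eq_sum_Ico_succ_bot (show i < m + 1 by omega),
    Finset.Ico_add_one_right_eq_Icc]

section CeilLemmas

lemma cond_iff {ai ai1 zu zv : ℕ} (h1 : 0 < ai) (h2 : 0 < ai1) (u v : ℕ) :
    ai * (ai1 * v + zv) ≤ (ai * u + zu) * ai1 ↔
    ⌈(zv : ℚ) / (ai1 : ℚ) - (zu : ℚ) / (ai : ℚ)⌉ ≤ (u : ℤ) - (v : ℤ) := by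
  have hA : (0:ℚ) < ai := by exact_mod_cast h1
  have hB : (0:ℚ) < ai1 := by exact_mod_cast h2
  rw [Int.ceil_le, show (((u : ℤ) - (v : ℤ) : ℤ) : ℚ) = (u : ℚ) - v by push_cast; ring,
    div_sub_div _ _ hB.ne' hA.ne', div_le_iff₀ (by positivity)]
  constructor <;> intro h
  · have h' : ((ai * (ai1 * v + zv) : ℕ) : ℚ) ≤ (((ai * u + zu) * ai1 : ℕ) : ℚ) := by
      exact_mod_cast h
    push_cast at h'
    nlinarith
  · have h' : ((ai * (ai1 * v + zv) : ℕ) : ℚ) ≤ (((ai * u + zu) * ai1 : ℕ) : ℚ) := by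
      push_cast
      nlinarith
    exact_mod_cast h'

lemma cond1_iff {a1 a2 : ℕ} (h2 : 0 < a2) (l1 l2 : ℕ) :
    a1 * l2 ≤ l1 * a2 ↔ ⌈((a1 : ℚ) * (l2 : ℚ)) / (a2 : ℚ)⌉ ≤ (l1 : ℤ) := by
  have hB : (0:ℚ) < a2 := by exact_mod_cast h2
  rw [Int.ceil_le, div_le_iff₀ hB]
  constructor <;> intro h
  · exact_mod_cast h
  · exact_mod_cast h

lemma ceil_split {a1 a2 : ℕ} (h2 : 0 < a2) (t z : ℕ) :
    ⌈((a1 : ℚ) * (((a2 * t + z : ℕ)) : ℚ)) / (a2 : ℚ)⌉ =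
      (a1 : ℤ) * t + ⌈((a1 : ℚ) * (z : ℚ)) / (a2 : ℚ)⌉ := by
  have hB : (0:ℚ) < a2 := by exact_mod_cast h2
  have e : ((a1 : ℚ) * (((a2 * t + z : ℕ)) : ℚ)) / (a2 : ℚ)
      = ((a1 : ℚ) * (z : ℚ)) / (a2 : ℚ) + ((a1 * t : ℤ) : ℚ) := by
    push_cast; field_simp; ring
  rw [e, Int.ceil_add_intCast]
  ring

lemma ctermx_nonneg {ai ai1 zu zv : ℕ} (h1 : 0 < ai) (hzu : zu < ai) :
    0 ≤ ⌈(zv : ℚ) / (ai1 : ℚ) - (zu : ℚ) / (ai : ℚ)⌉ := by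
  have hA : (0:ℚ) < ai := by exact_mod_cast h1
  have h3 : (zu : ℚ) / (ai : ℚ) < 1 := by
    rw [div_lt_one hA]; exact_mod_cast hzu
  have h4 : (0:ℚ) ≤ (zv : ℚ) / (ai1 : ℚ) := by positivity
  have h5 : ((-1 : ℤ) : ℚ) < (zv : ℚ) / (ai1 : ℚ) - (zu : ℚ) / (ai : ℚ) := by
    push_cast; linarith
  have := Int.lt_ceil.mpr h5
  omega

end CeilLemmas

lemma sum_Icc_top (f : ℕ → ℤ) {i m : ℕ} (h : i ≤ m) (h1 : 1 ≤ m) :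
    ∑ j ∈ Finset.Icc i m, f j = ∑ j ∈ Finset.Icc i (m - 1), f j + f m := by
  obtain ⟨m', rfl⟩ : ∃ m', m = m' + 1 := ⟨m - 1, by omega⟩
  rw [Nat.add_sub_cancel, Finset.sum_Icc_succ_top (by omega)]

lemma bseq_two (a : ℕ → ℕ) : bseq a 2 = (a 1 : ℤ) + a 2 := by
  simp [bseq, show Finset.Icc 1 2 = {1, 2} by rfl]

lemma bseq_succ (a : ℕ → ℕ) {i : ℕ} (h : 2 ≤ i) :
    bseq a (i + 1) = bseq a i + a (i + 1) := by
  have h1 : ¬ (i + 1 = 1) := by omega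
  have h2 : ¬ (i = 1) := by omega
  rw [bseq, bseq, if_neg h1, if_neg h2, Finset.sum_Icc_succ_top (by omega)]

lemma tele (a : ℕ → ℕ) (T : ℕ → ℤ) :
    ∀ k, 2 ≤ k →
      (∑ j ∈ Finset.Icc 2 (k - 1), bseq a j * (T j - T (j + 1))) + bseq a k * T k =
      bseq a 2 * T 2 + ∑ j ∈ Finset.Icc 3 k, (a j : ℤ) * T j := by
  intro k hk
  induction k, hk using Nat.le_induction with
  | base => simp
  | succ m hm ih =>
    rw [Nat.add_sub_cancel, sum_Icc_top _ (by omega) (by omega),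
      Finset.sum_Icc_succ_top (show 3 ≤ m + 1 by omega), bseq_succ a hm]
    linarith [ih]

section Psi

variable {a : ℕ → ℕ} {k : ℕ}
variable (ha : ∀ i, 1 ≤ i → i ≤ k → 0 < a i)
variable {z s : ℕ → ℕ}
variable (hz : ∀ i, 2 ≤ i → i ≤ k → z i < a i)

lemma Tfun_k (hk : 1 ≤ k) : Tfun a k z s k = (s k : ℤ) := by
  rw [Tfun, Finset.Icc_eq_empty (by omega), Finset.sum_empty, zero_add]

lemma Tfun_rec {i : ℕ} (h : i ≤ k - 1) :
    Tfun a k z s i = ((s i : ℤ) + cterm a z i) + Tfun a k z s (i + 1) := by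
  rw [Tfun, Tfun, sum_Icc_bot _ h, add_assoc]

include ha hz in
lemma Tfun_nonneg {i : ℕ} (h2 : 2 ≤ i) : 0 ≤ Tfun a k z s i := by
  refine add_nonneg (Finset.sum_nonneg fun j hj => ?_) (by positivity)
  rw [Finset.mem_Icc] at hj
  exact add_nonneg (by positivity)
    (ctermx_nonneg (ha j (by omega) (by omega)) (hz j (by omega) (by omega)))

include ha hz in
lemma lam0_eq {i : ℕ} (h2 : 2 ≤ i) (hik : i ≤ k) :
    lam0 a k z s i = a i * (Tfun a k z s i).toNat + z i := by
  obtain ⟨t, ht⟩ := Int.eq_ofNat_of_zero_le (Tfun_nonneg ha hz h2 (s := s))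
  rw [lam0, if_pos ⟨h2, hik⟩, ht, ← Nat.cast_mul, Int.toNat_natCast, Int.toNat_natCast]

include ha hz in
lemma lam0_int {i : ℕ} (h2 : 2 ≤ i) (hik : i ≤ k) :
    (lam0 a k z s i : ℤ) = (a i : ℤ) * Tfun a k z s i + z i := by
  rw [lam0_eq ha hz h2 hik]
  push_cast
  rw [Int.toNat_of_nonneg (Tfun_nonneg ha hz h2)]

include ha hz in
lemma lam0_mod {i : ℕ} (h2 : 2 ≤ i) (hik : i ≤ k) :
    lam0 a k z s i % a i = z i := by
  rw [lam0_eq ha hz h2 hik, Nat.mul_add_mod, Nat.mod_eq_of_lt (hz i h2 hik)]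

include ha hz in
lemma lam0_div {i : ℕ} (h2 : 2 ≤ i) (hik : i ≤ k) :
    lam0 a k z s i / a i = (Tfun a k z s i).toNat := by
  rw [lam0_eq ha hz h2 hik, Nat.mul_add_div (ha i (by omega) hik),
    Nat.div_eq_of_lt (hz i h2 hik), Nat.add_zero]

lemma lamfun_ne_one {i : ℕ} (h : ¬ i = 1) : lamfun a k z s i = lam0 a k z s i := if_neg h

lemma lamfun_one_int :
    (lamfun a k z s 1 : ℤ) =
      ⌈((a 1 : ℚ) * (lam0 a k z s 2 : ℚ)) / (a 2 : ℚ)⌉ + (s 1 : ℤ) := by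
  rw [lamfun, if_pos rfl]
  push_cast
  rw [Int.toNat_of_nonneg (Int.ceil_nonneg (by positivity))]

end Psi

def Tl (a lam : ℕ → ℕ) (i : ℕ) : ℤ := ((lam i / a i : ℕ) : ℤ)

lemma claimA (a : ℕ → ℕ) (k : ℕ) (hk : 0 < k) (ha : ∀ i, 1 ≤ i → i ≤ k → 0 < a i)
    (lam : ℕ → ℕ) (hsupp : ∀ j, j = 0 ∨ k < j → lam j = 0)
    (hineq : ∀ i, 1 ≤ i → i ≤ k - 1 → a i * lam (i + 1) ≤ lam i * a (i + 1)) :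
    (∑ i ∈ Finset.Icc 1 k, (lam i : ℤ)) =
      ⌈((a 1 : ℚ) * (zfun a k lam 2 : ℚ)) / (a 2 : ℚ)⌉ +
      (∑ i ∈ Finset.Icc 2 k, (zfun a k lam i : ℤ)) +
      (∑ i ∈ Finset.Icc 2 (k - 1), bseq a i * cterm a (zfun a k lam) i) +
      (∑ i ∈ Finset.Icc 1 k, bseq a i * (sfun a k lam i : ℤ)) := by
  rcases eq_or_lt_of_le (Nat.succ_le_of_lt hk) with h1 | hk2
  · -- k = 1
    have hk1 : k = 1 := h1.symm
    subst hk1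
    have hl2 : lam 2 = 0 := hsupp 2 (Or.inr one_lt_two)
    have hz2 : zfun a 1 lam 2 = 0 := by simp [zfun]
    have hs1 : sfun a 1 lam 1 = lam 1 := by simp [sfun, hl2]
    rw [hz2]
    simp [bseq, hs1]
  · -- 2 ≤ k
    have hk2 : 2 ≤ k := hk2
    have ha2 : 0 < a 2 := ha 2 (by omega) hk2
    have hZval : ∀ i, 2 ≤ i → i ≤ k → zfun a k lam i = lam i % a i := by
      intro i h2 hik; simp only [zfun, if_pos (And.intro h2 hik)]
    have F1 : ∀ i, 2 ≤ i → i ≤ k →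
        (lam i : ℤ) = (a i : ℤ) * Tl a lam i + (zfun a k lam i : ℤ) := by
      intro i h2 hik
      rw [hZval i h2 hik, Tl]
      exact_mod_cast (Nat.div_add_mod (lam i) (a i)).symm
    have Fineq : ∀ i, 2 ≤ i → i ≤ k - 1 →
        cterm a (zfun a k lam) i ≤ Tl a lam i - Tl a lam (i + 1) := by
      intro i h2 hik
      have h := hineq i (by omega) hik
      have e1 : lam i = a i * (lam i / a i) + lam i % a i := (Nat.div_add_mod _ _).symm
      have e2 : lam (i + 1) = a (i + 1) * (lam (i + 1) / a (i + 1)) + lam (i + 1) % a (i + 1) :=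
        (Nat.div_add_mod _ _).symm
      rw [e1, e2] at h
      have key := (cond_iff (ha i (by omega) (by omega)) (ha (i + 1) (by omega) (by omega))
        (lam i / a i) (lam (i + 1) / a (i + 1))).mp h
      have hcval : cterm a (zfun a k lam) i =
          ⌈((lam (i + 1) % a (i + 1) : ℕ) : ℚ) / (a (i + 1) : ℚ)
            - ((lam i % a i : ℕ) : ℚ) / (a i : ℚ)⌉ := by
        rw [cterm, hZval i h2 (by omega), hZval (i + 1) (by omega) (by omega)]
      rw [hcval, Tl, Tl]
      exact key
    have hs1 : (sfun a k lam 1 : ℤ) =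
        (lam 1 : ℤ) - ⌈((a 1 : ℚ) * (lam 2 : ℚ)) / (a 2 : ℚ)⌉ := by
      have h := (cond1_iff ha2 (lam 1) (lam 2)).mp (hineq 1 (le_refl 1) (by omega))
      have hv : sfun a k lam 1
          = ((lam 1 : ℤ) - ⌈((a 1 : ℚ) * (lam 2 : ℚ)) / (a 2 : ℚ)⌉).toNat := by
        simp [sfun]
      rw [hv, Int.toNat_of_nonneg (by omega)]
    have hmid : ∀ i, 2 ≤ i → i ≤ k - 1 → (sfun a k lam i : ℤ) =
        Tl a lam i - Tl a lam (i + 1) - cterm a (zfun a k lam) i := by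
      intro i h2 hik
      have hge := Fineq i h2 hik
      rw [Tl, Tl] at hge
      have hv : sfun a k lam i
          = (((lam i / a i : ℕ) : ℤ) - ((lam (i + 1) / a (i + 1) : ℕ) : ℤ)
              - cterm a (zfun a k lam) i).toNat := by
        simp only [sfun]
        rw [if_neg (by omega), if_pos (And.intro h2 hik)]
      rw [hv, Int.toNat_of_nonneg (by omega)]
      rfl
    have hsk : (sfun a k lam k : ℤ) = Tl a lam k := by
      have hv : sfun a k lam k = lam k / a k := by
        simp [sfun, show ¬ (k = 1) by omega, show ¬ (2 ≤ k ∧ k ≤ k - 1) by omega]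
      rw [hv]
      rfl
    have e0 : ∑ i ∈ Finset.Icc 1 k, (lam i : ℤ)
        = (lam 1 : ℤ) + ∑ i ∈ Finset.Icc 2 k, (lam i : ℤ) := by
      rw [sum_Icc_bot _ (show 1 ≤ k by omega)]
    have e1 : ∑ i ∈ Finset.Icc 2 k, (lam i : ℤ)
        = ∑ i ∈ Finset.Icc 2 k, ((a i : ℤ) * Tl a lam i)
          + ∑ i ∈ Finset.Icc 2 k, (zfun a k lam i : ℤ) := by
      rw [← Finset.sum_add_distrib]
      refine Finset.sum_congr rfl fun i hi => ?_
      rw [Finset.mem_Icc] at hi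
      exact F1 i hi.1 hi.2
    have e2 : ⌈((a 1 : ℚ) * (lam 2 : ℚ)) / (a 2 : ℚ)⌉
        = (a 1 : ℤ) * Tl a lam 2 + ⌈((a 1 : ℚ) * (zfun a k lam 2 : ℚ)) / (a 2 : ℚ)⌉ := by
      have e := ceil_split (a1 := a 1) ha2 (lam 2 / a 2) (lam 2 % a 2)
      rw [Nat.div_add_mod] at e
      rw [hZval 2 (le_refl 2) hk2]
      exact e
    have e4 : ∑ i ∈ Finset.Icc 1 k, bseq a i * (sfun a k lam i : ℤ)
        = (sfun a k lam 1 : ℤ)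
          + (∑ i ∈ Finset.Icc 2 (k - 1), bseq a i * (sfun a k lam i : ℤ))
          + bseq a k * Tl a lam k := by
      rw [sum_Icc_bot _ (show 1 ≤ k by omega),
        sum_Icc_top _ (show 1 + 1 ≤ k by omega) (by omega), hsk,
        show bseq a 1 = 1 from if_pos rfl, one_mul]
      norm_num
      ring
    have e5 : ∑ i ∈ Finset.Icc 2 (k - 1), bseq a i * cterm a (zfun a k lam) i
        + ∑ i ∈ Finset.Icc 2 (k - 1), bseq a i * (sfun a k lam i : ℤ)
        = ∑ i ∈ Finset.Icc 2 (k - 1), bseq a i * (Tl a lam i - Tl a lam (i + 1)) := by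
      rw [← Finset.sum_add_distrib]
      refine Finset.sum_congr rfl fun i hi => ?_
      rw [Finset.mem_Icc] at hi
      rw [hmid i hi.1 hi.2]
      ring
    have e6 := tele a (Tl a lam) k hk2
    have e7 : ∑ i ∈ Finset.Icc 2 k, (a i : ℤ) * Tl a lam i
        = (a 2 : ℤ) * Tl a lam 2 + ∑ i ∈ Finset.Icc 3 k, (a i : ℤ) * Tl a lam i := by
      rw [sum_Icc_bot _ hk2]
    have e8 : bseq a 2 * Tl a lam 2 = (a 1 : ℤ) * Tl a lam 2 + (a 2 : ℤ) * Tl a lam 2 := by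
      rw [bseq_two]; ring
    linarith
section PsiLemmas

variable {a : ℕ → ℕ} {k : ℕ}
variable (ha : ∀ i, 1 ≤ i → i ≤ k → 0 < a i)
variable {z s : ℕ → ℕ}
variable (hz : ∀ i, 2 ≤ i → i ≤ k → z i < a i)

lemma psi_supp (hk : 0 < k) (z s : ℕ → ℕ) :
    ∀ j, j = 0 ∨ k < j → lamfun a k z s j = 0 := by
  intro j hj
  have h1 : ¬ (j = 1) := by omega
  rw [lamfun, if_neg h1, lam0, if_neg (by omega)]

include ha hz in
lemma psi_ineq (hk : 0 < k) :
    ∀ i, 1 ≤ i → i ≤ k - 1 →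
      a i * lamfun a k z s (i + 1) ≤ lamfun a k z s i * a (i + 1) := by
  intro i h1 hik
  have hk2 : 2 ≤ k := by omega
  rcases Nat.eq_or_lt_of_le h1 with h1e | h2
  · -- i = 1
    obtain rfl : i = 1 := h1e.symm
    rw [lamfun_ne_one (by omega)]
    have goal2 : a 1 * lam0 a k z s 2 ≤ lamfun a k z s 1 * a 2 := by
      rw [cond1_iff (ha 2 (by omega) hk2)]
      rw [lamfun_one_int]
      linarith [(by positivity : (0:ℤ) ≤ (s 1 : ℤ))]
    exact goal2
  · -- 2 ≤ i
    have h2 : 2 ≤ i := h2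
    have hik' : i + 1 ≤ k := by omega
    rw [lamfun_ne_one (by omega), lamfun_ne_one (by omega),
      lam0_eq ha hz h2 (by omega), lam0_eq ha hz (by omega) hik',
      cond_iff (ha i (by omega) (by omega)) (ha (i + 1) (by omega) hik'),
      Int.toNat_of_nonneg (Tfun_nonneg ha hz h2),
      Int.toNat_of_nonneg (Tfun_nonneg ha hz (show 2 ≤ i + 1 by omega))]
    have hrec := Tfun_rec (a := a) (k := k) (z := z) (s := s) (i := i) (by omega)
    have hce : cterm a z i
        = ⌈(z (i + 1) : ℚ) / (a (i + 1) : ℚ) - (z i : ℚ) / (a i : ℚ)⌉ := rfl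
    rw [← hce, hrec]
    linarith [(by positivity : (0:ℤ) ≤ (s i : ℤ))]

include ha hz in
lemma phiPsi_z (hz0 : ∀ i, ¬(2 ≤ i ∧ i ≤ k) → z i = 0) :
    zfun a k (lamfun a k z s) = z := by
  funext i
  by_cases hi : 2 ≤ i ∧ i ≤ k
  · simp only [zfun, if_pos hi]
    rw [lamfun_ne_one (by omega), lam0_mod ha hz hi.1 hi.2]
  · simp only [zfun, if_neg hi]
    exact (hz0 i hi).symm

include ha hz in
lemma phiPsi_s (hk : 0 < k) (hz0 : ∀ i, ¬(2 ≤ i ∧ i ≤ k) → z i = 0)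
    (hs0 : ∀ i, ¬(1 ≤ i ∧ i ≤ k) → s i = 0) :
    sfun a k (lamfun a k z s) = s := by
  have hzeq := phiPsi_z (s := s) ha hz hz0
  funext i
  by_cases hi1 : i = 1
  · subst hi1
    have hL2 : lamfun a k z s 2 = lam0 a k z s 2 := lamfun_ne_one (by omega)
    have hv : sfun a k (lamfun a k z s) 1
        = ((lamfun a k z s 1 : ℤ)
            - ⌈((a 1 : ℚ) * (lamfun a k z s 2 : ℚ)) / (a 2 : ℚ)⌉).toNat := by
      simp [sfun]
    rw [hv, hL2, lamfun_one_int]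
    omega
  · by_cases hi2 : 2 ≤ i ∧ i ≤ k - 1
    · have hik : i ≤ k := by omega
      have hv : sfun a k (lamfun a k z s) i
          = (((lamfun a k z s i / a i : ℕ) : ℤ)
              - ((lamfun a k z s (i + 1) / a (i + 1) : ℕ) : ℤ)
              - cterm a (zfun a k (lamfun a k z s)) i).toNat := by
        simp only [sfun]
        rw [if_neg hi1, if_pos hi2]
      rw [hv, hzeq, lamfun_ne_one (by omega), lamfun_ne_one (by omega),
        lam0_div ha hz hi2.1 hik, lam0_div ha hz (by omega) (by omega),
        Int.toNat_of_nonneg (Tfun_nonneg ha hz hi2.1),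
        Int.toNat_of_nonneg (Tfun_nonneg ha hz (show 2 ≤ i + 1 by omega))]
      have hrec := Tfun_rec (a := a) (k := k) (z := z) (s := s) (i := i) (by omega)
      omega
    · by_cases hik : i = k
      · have hk2 : 2 ≤ k := by omega
        have hv : sfun a k (lamfun a k z s) i = lamfun a k z s k / a k := by
          simp only [sfun]
          rw [if_neg hi1, if_neg hi2, if_pos hik]
        rw [hv, hik, lamfun_ne_one (show ¬ (k = 1) by omega),
          lam0_div ha hz (by omega) (le_refl k), Tfun_k (by omega)]
        simp
      · have hv : sfun a k (lamfun a k z s) i = 0 := by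
          simp only [sfun]
          rw [if_neg hi1, if_neg hi2, if_neg hik]
        rw [hv]
        exact (hs0 i (by omega)).symm

end PsiLemmas
section PhiLemmas

variable {a : ℕ → ℕ} {k : ℕ}
variable (ha : ∀ i, 1 ≤ i → i ≤ k → 0 < a i)
variable {lam : ℕ → ℕ}
variable (hineq : ∀ i, 1 ≤ i → i ≤ k - 1 → a i * lam (i + 1) ≤ lam i * a (i + 1))

include ha hineq in
lemma sfun_mid_int (hk2 : 2 ≤ k) {i : ℕ} (h2 : 2 ≤ i) (hik : i ≤ k - 1) :
    (sfun a k lam i : ℤ) = Tl a lam i - Tl a lam (i + 1) - cterm a (zfun a k lam) i := by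
  have hZval : ∀ j, 2 ≤ j → j ≤ k → zfun a k lam j = lam j % a j := by
    intro j hj2 hjk; simp only [zfun, if_pos (And.intro hj2 hjk)]
  have h := hineq i (by omega) hik
  have e1 : lam i = a i * (lam i / a i) + lam i % a i := (Nat.div_add_mod _ _).symm
  have e2 : lam (i + 1) = a (i + 1) * (lam (i + 1) / a (i + 1)) + lam (i + 1) % a (i + 1) :=
    (Nat.div_add_mod _ _).symm
  rw [e1, e2] at h
  have key := (cond_iff (ha i (by omega) (by omega)) (ha (i + 1) (by omega) (by omega))
    (lam i / a i) (lam (i + 1) / a (i + 1))).mp h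
  have hcval : cterm a (zfun a k lam) i =
      ⌈((lam (i + 1) % a (i + 1) : ℕ) : ℚ) / (a (i + 1) : ℚ)
        - ((lam i % a i : ℕ) : ℚ) / (a i : ℚ)⌉ := by
    rw [cterm, hZval i h2 (by omega), hZval (i + 1) (by omega) (by omega)]
  have hv : sfun a k lam i
      = (((lam i / a i : ℕ) : ℤ) - ((lam (i + 1) / a (i + 1) : ℕ) : ℤ)
          - cterm a (zfun a k lam) i).toNat := by
    simp only [sfun]
    rw [if_neg (by omega), if_pos (And.intro h2 hik)]
  rw [hv, Int.toNat_of_nonneg (by rw [hcval]; exact by omega)]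
  rfl

include ha hineq in
lemma sfun_one_int (hk2 : 2 ≤ k) :
    (sfun a k lam 1 : ℤ) = (lam 1 : ℤ) - ⌈((a 1 : ℚ) * (lam 2 : ℚ)) / (a 2 : ℚ)⌉ := by
  have h := (cond1_iff (ha 2 (by omega) hk2) (lam 1) (lam 2)).mp
    (hineq 1 (le_refl 1) (by omega))
  have hv : sfun a k lam 1
      = ((lam 1 : ℤ) - ⌈((a 1 : ℚ) * (lam 2 : ℚ)) / (a 2 : ℚ)⌉).toNat := by
    simp [sfun]
  rw [hv, Int.toNat_of_nonneg (by omega)]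

lemma sfun_k (hk2 : 2 ≤ k) (lam : ℕ → ℕ) : sfun a k lam k = lam k / a k := by
  simp [sfun, show ¬ (k = 1) by omega, show ¬ (2 ≤ k ∧ k ≤ k - 1) by omega]

include ha hineq in
lemma Trec (hk2 : 2 ≤ k) :
    ∀ d i, 2 ≤ i → i ≤ k → k - i ≤ d →
      Tfun a k (zfun a k lam) (sfun a k lam) i = Tl a lam i := by
  intro d
  induction d with
  | zero =>
    intro i h2 hik hd
    have hik' : i = k := by omega
    subst hik'
    rw [Tfun_k (by omega), sfun_k hk2]
    rfl
  | succ d ih =>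
    intro i h2 hik hd
    by_cases hik' : i = k
    · subst hik'
      rw [Tfun_k (by omega), sfun_k hk2]
      rfl
    · have hik1 : i ≤ k - 1 := by omega
      rw [Tfun_rec hik1, ih (i + 1) (by omega) (by omega) (by omega),
        sfun_mid_int ha hineq hk2 h2 hik1]
      ring

include ha hineq in
lemma psiPhi (hk : 0 < k) (hsupp : ∀ j, j = 0 ∨ k < j → lam j = 0) :
    lamfun a k (zfun a k lam) (sfun a k lam) = lam := by
  have hzZ : ∀ i, 2 ≤ i → i ≤ k → zfun a k lam i < a i := by
    intro i h2 hik
    simp only [zfun, if_pos (And.intro h2 hik)]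
    exact Nat.mod_lt _ (ha i (by omega) hik)
  funext i
  by_cases hi1 : i = 1
  · subst hi1
    rcases Nat.lt_or_ge k 2 with hk1 | hk2
    · -- k = 1
      have hk1 : k = 1 := by omega
      have hl2 : lam 2 = 0 := hsupp 2 (by omega)
      have h02 : lam0 a k (zfun a k lam) (sfun a k lam) 2 = 0 := by
        rw [lam0, if_neg (by omega)]
      have hs1 : sfun a k lam 1 = lam 1 := by
        simp [sfun, hl2]
      rw [lamfun, if_pos rfl, h02, hs1]
      simp
    · -- 2 ≤ k
      have hL2 : lam0 a k (zfun a k lam) (sfun a k lam) 2 = lam 2 := by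
        rw [lam0_eq ha hzZ (le_refl 2) hk2, Trec ha hineq hk2 (k - 2) 2 (le_refl 2) hk2
          (by omega)]
        show a 2 * (((lam 2 / a 2 : ℕ) : ℤ)).toNat + zfun a k lam 2 = lam 2
        rw [Int.toNat_natCast]
        simp only [zfun, if_pos (And.intro (le_refl 2) hk2)]
        exact Nat.div_add_mod _ _
      have hC : (0:ℤ) ≤ ⌈((a 1 : ℚ) * (lam 2 : ℚ)) / (a 2 : ℚ)⌉ :=
        Int.ceil_nonneg (by positivity)
      have hs1 := sfun_one_int ha hineq hk2
      rw [lamfun, if_pos rfl, hL2]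
      omega
  · by_cases hi : 2 ≤ i ∧ i ≤ k
    · rw [lamfun_ne_one hi1, lam0_eq ha hzZ hi.1 hi.2,
        Trec ha hineq (by omega) (k - i) i hi.1 hi.2 (le_refl _)]
      show a i * (((lam i / a i : ℕ) : ℤ)).toNat + zfun a k lam i = lam i
      rw [Int.toNat_natCast]
      simp only [zfun, if_pos hi]
      exact Nat.div_add_mod _ _
    · rw [lamfun_ne_one hi1, lam0, if_neg hi]
      exact (hsupp i (by omega)).symm

end PhiLemmas
lemma sfun_supp {a : ℕ → ℕ} {k : ℕ} (hk : 0 < k) (lam : ℕ → ℕ) :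
    ∀ i, ¬(1 ≤ i ∧ i ≤ k) → sfun a k lam i = 0 := by
  intro i hi
  simp only [sfun]
  rw [if_neg (by omega), if_neg (by omega), if_neg (by omega)]

end Stmt15

open Stmt15

/-- Theorem 2: the weight-`n` coefficient of the generating function of
nonnegative sequences with `λᵢ/aᵢ ≥ λ_{i+1}/a_{i+1}` equals the number of pairs `(z, s)`
with `0 ≤ zᵢ < aᵢ` (`2 ≤ i ≤ k`), `s ∈ ℕ^k`, and
`⌈a₁z₂/a₂⌉ + ∑ zᵢ + ∑_{i=2}^{k-1} bᵢ⌈z_{i+1}/a_{i+1} - zᵢ/aᵢ⌉ + ∑ bᵢsᵢ = n`. -/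
theorem stmt_15 (k n : ℕ) (hk : 0 < k) (a : ℕ → ℕ)
    (ha : ∀ i, 1 ≤ i → i ≤ k → 0 < a i) :
    {lam : ℕ → ℕ | (∀ j, j = 0 ∨ k < j → lam j = 0) ∧
      (∀ i, 1 ≤ i → i ≤ k - 1 → a i * lam (i + 1) ≤ lam i * a (i + 1)) ∧
      ∑ i ∈ Finset.Icc 1 k, lam i = n}.ncard =
    {zs : (ℕ → ℕ) × (ℕ → ℕ) |
      (∀ i, (2 ≤ i ∧ i ≤ k) → zs.1 i < a i) ∧
      (∀ i, ¬(2 ≤ i ∧ i ≤ k) → zs.1 i = 0) ∧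
      (∀ i, ¬(1 ≤ i ∧ i ≤ k) → zs.2 i = 0) ∧
      (⌈((a 1 : ℚ) * (zs.1 2 : ℚ)) / (a 2 : ℚ)⌉ +
        (∑ i ∈ Finset.Icc 2 k, (zs.1 i : ℤ)) +
        (∑ i ∈ Finset.Icc 2 (k - 1),
          bseq a i * ⌈(zs.1 (i + 1) : ℚ) / (a (i + 1) : ℚ) - (zs.1 i : ℚ) / (a i : ℚ)⌉) +
        (∑ i ∈ Finset.Icc 1 k, bseq a i * (zs.2 i : ℤ)) = (n : ℤ))}.ncard := by
  have hbij : Set.BijOn (fun lam => (zfun a k lam, sfun a k lam))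
      {lam : ℕ → ℕ | (∀ j, j = 0 ∨ k < j → lam j = 0) ∧
        (∀ i, 1 ≤ i → i ≤ k - 1 → a i * lam (i + 1) ≤ lam i * a (i + 1)) ∧
        ∑ i ∈ Finset.Icc 1 k, lam i = n}
      {zs : (ℕ → ℕ) × (ℕ → ℕ) |
        (∀ i, (2 ≤ i ∧ i ≤ k) → zs.1 i < a i) ∧
        (∀ i, ¬(2 ≤ i ∧ i ≤ k) → zs.1 i = 0) ∧
        (∀ i, ¬(1 ≤ i ∧ i ≤ k) → zs.2 i = 0) ∧
        (⌈((a 1 : ℚ) * (zs.1 2 : ℚ)) / (a 2 : ℚ)⌉ +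
          (∑ i ∈ Finset.Icc 2 k, (zs.1 i : ℤ)) +
          (∑ i ∈ Finset.Icc 2 (k - 1),
            bseq a i * ⌈(zs.1 (i + 1) : ℚ) / (a (i + 1) : ℚ) - (zs.1 i : ℚ) / (a i : ℚ)⌉) +
          (∑ i ∈ Finset.Icc 1 k, bseq a i * (zs.2 i : ℤ)) = (n : ℤ))} := by
    refine ⟨?_, ?_, ?_⟩
    · -- MapsTo
      rintro lam ⟨hsupp, hineq, hsum⟩
      refine ⟨?_, ?_, ?_, ?_⟩
      · rintro i ⟨h2, hik⟩
        show zfun a k lam i < a i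
        simp only [zfun, if_pos (And.intro h2 hik)]
        exact Nat.mod_lt _ (ha i (by omega) hik)
      · intro i hi
        show zfun a k lam i = 0
        simp only [zfun, if_neg hi]
      · intro i hi
        exact sfun_supp hk lam i hi
      · show ⌈((a 1 : ℚ) * (zfun a k lam 2 : ℚ)) / (a 2 : ℚ)⌉ +
          (∑ i ∈ Finset.Icc 2 k, (zfun a k lam i : ℤ)) +
          (∑ i ∈ Finset.Icc 2 (k - 1),
            bseq a i * cterm a (zfun a k lam) i) +
          (∑ i ∈ Finset.Icc 1 k, bseq a i * (sfun a k lam i : ℤ)) = (n : ℤ)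
        rw [← claimA a k hk ha lam hsupp hineq]
        exact_mod_cast congrArg (Nat.cast : ℕ → ℤ) hsum
    · -- InjOn
      rintro l1 ⟨hsupp1, hineq1, _⟩ l2 ⟨hsupp2, hineq2, _⟩ heq
      have hz12 : zfun a k l1 = zfun a k l2 := congrArg Prod.fst heq
      have hs12 : sfun a k l1 = sfun a k l2 := congrArg Prod.snd heq
      have e1 := psiPhi ha hineq1 hk hsupp1
      have e2 := psiPhi ha hineq2 hk hsupp2
      rw [← e1, ← e2, hz12, hs12]
    · -- SurjOn
      rintro p ⟨hzb, hz0, hs0, hsum⟩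
      have hz : ∀ i, 2 ≤ i → i ≤ k → p.1 i < a i := fun i h2 hik => hzb i ⟨h2, hik⟩
      have hsupp' := psi_supp (a := a) hk p.1 p.2
      have hineq' := psi_ineq (s := p.2) ha hz hk
      have hzeq := phiPsi_z (s := p.2) ha hz hz0
      have hseq := phiPsi_s ha hz hk hz0 hs0
      have hsum' : ∑ i ∈ Finset.Icc 1 k, lamfun a k p.1 p.2 i = n := by
        have hA := claimA a k hk ha (lamfun a k p.1 p.2) hsupp' hineq'
        rw [hzeq, hseq] at hA
        simp only [cterm] at hA
        rw [hsum] at hA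
        exact_mod_cast hA
      refine ⟨lamfun a k p.1 p.2, ⟨hsupp', hineq', hsum'⟩, ?_⟩
      show (zfun a k (lamfun a k p.1 p.2), sfun a k (lamfun a k p.1 p.2)) = p
      rw [hzeq, hseq]
  rw [← hbij.image_eq]
  exact (Set.ncard_image_of_injOn hbij.injOn).symm
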